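/- Let θ ∈ (0,1) and X₁ be a positive integer such that for every integer x ≥ X₁ the interval [x, x + x^θ] contains a prime number. Then for every prime-power p^k ≥ X₁ (p prime, k ≥ 1), the number of positive integers x that are not prime-powers, satisfy q(x) = p^k, and satisfy gcd(x, P(x)) > 1, is at most p^{kθ−1}. -/

import Mathlib

open scoped Classical

/-- The largest element of ℙ*₁ = ℙ* ∪ {1} (prime-powers together with 1) not exceeding `x`. -/
noncomputable def q (x : ℕ) : ℕ :=
  sSup {m : ℕ | (IsPrimePow m ∨ m = 1) ∧ m ≤ x}

/-- The prime-power map. -/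
noncomputable def P (x : ℕ) : ℕ :=
  if x = 1 then 1
  else if IsPrimePow x then x / x.minFac
  else x - q x

/-- The orbit of `x` under `P`: `orbit x 1 = x` and `orbit x (n+1) = P (orbit x n)`. -/
noncomputable def orbit (x n : ℕ) : ℕ := P^[n - 1] x

/-- The transient length `T x = min {n ≥ 1 : x_n = 1}`. -/
noncomputable def T (x : ℕ) : ℕ := sInf {n : ℕ | 1 ≤ n ∧ orbit x n = 1}

/-- The settling time `S x = min {n ≥ 1 : x_n ∈ ℙ*₁}`. -/
noncomputable def S (x : ℕ) : ℕ :=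
  sInf {n : ℕ | 1 ≤ n ∧ (IsPrimePow (orbit x n) ∨ orbit x n = 1)}

lemma q_bddAbove (x : ℕ) : BddAbove {m : ℕ | (IsPrimePow m ∨ m = 1) ∧ m ≤ x} :=
  ⟨x, fun _ hy => hy.2⟩

lemma le_q {m x : ℕ} (h : IsPrimePow m ∨ m = 1) (hm : m ≤ x) : m ≤ q x :=
  le_csSup (q_bddAbove x) ⟨h, hm⟩

lemma q_le_self (x : ℕ) : q x ≤ x := by
  rcases Set.eq_empty_or_nonempty {m : ℕ | (IsPrimePow m ∨ m = 1) ∧ m ≤ x} with h | h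
  · rw [q, h, csSup_empty]; exact Nat.zero_le x
  · exact csSup_le h fun y hy => hy.2

theorem stmt_10 (θ : ℝ) (hθ : θ ∈ Set.Ioo (0 : ℝ) 1) (X₁ : ℕ) (hX₁ : 0 < X₁)
    (hprime : ∀ x : ℕ, X₁ ≤ x →
      ∃ r : ℕ, r.Prime ∧ (x : ℝ) ≤ r ∧ (r : ℝ) ≤ (x : ℝ) + (x : ℝ) ^ θ)
    (p k : ℕ) (hp : p.Prime) (hk : 1 ≤ k) (hpk : X₁ ≤ p ^ k) :
    {x : ℕ | ¬ IsPrimePow x ∧ q x = p ^ k ∧ 1 < Nat.gcd x (P x)}.Finite ∧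
    (Nat.card {x : ℕ | ¬ IsPrimePow x ∧ q x = p ^ k ∧ 1 < Nat.gcd x (P x)} : ℝ) ≤
      (p : ℝ) ^ ((k : ℝ) * θ - 1) := by
  set SS := {x : ℕ | ¬ IsPrimePow x ∧ q x = p ^ k ∧ 1 < Nat.gcd x (P x)} with hSS
  have hp2 : 2 ≤ p := hp.two_le
  have hpk2 : 2 ≤ p ^ k := le_trans hp2 (Nat.le_self_pow (by omega) p)
  have hppk : IsPrimePow (p ^ k) := hp.prime.isPrimePow.pow (by omega)
  -- general facts about elements of SS
  have key : ∀ x ∈ SS, p ∣ x ∧ p ^ k < x := by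
    intro x hx
    obtain ⟨hnpp, hq, hg⟩ := hx
    have hle : p ^ k ≤ x := hq ▸ q_le_self x
    have hx1 : x ≠ 1 := by omega
    have hPx : P x = x - p ^ k := by
      rw [P, if_neg hx1, if_neg hnpp, hq]
    rw [hPx] at hg
    have hdx : Nat.gcd x (x - p ^ k) ∣ x := Nat.gcd_dvd_left _ _
    have hdpk : Nat.gcd x (x - p ^ k) ∣ p ^ k := by
      have := Nat.dvd_sub hdx (Nat.gcd_dvd_right x (x - p ^ k))
      rwa [Nat.sub_sub_self hle] at this
    obtain ⟨j, hj, hdj⟩ := (Nat.dvd_prime_pow hp).mp hdpk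
    have hj0 : j ≠ 0 := by rintro rfl; simp [hdj] at hg
    have hpdx : p ∣ x := dvd_trans (dvd_trans (dvd_pow_self p hj0) (hdj ▸ dvd_refl _)) hdx
    refine ⟨hpdx, lt_of_le_of_ne hle ?_⟩
    rintro rfl; exact hnpp hppk
  obtain ⟨r, hr, hr1, hr2⟩ := hprime (p ^ k) hpk
  have hrpk : (p : ℕ) ^ k ≤ r := by exact_mod_cast hr1
  rcases eq_or_lt_of_le hrpk with heq | hlt
  · -- r = p ^ k, so k = 1 and the set is empty by Bertrand
    have hk1 : k = 1 := by
      by_contra hk1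
      have h2k : 2 ≤ k := by omega
      have : p ∣ r := by rw [← heq]; exact dvd_pow_self p (by omega)
      rcases (Nat.Prime.eq_one_or_self_of_dvd hr p this) with h | h
      · omega
      · have : p < p ^ k := by
          calc p = p ^ 1 := (pow_one p).symm
          _ < p ^ k := Nat.pow_lt_pow_right (by omega) (by omega)
        omega
    have hempty : SS = ∅ := by
      ext x
      simp only [Set.mem_empty_iff_false, iff_false]
      intro hx
      obtain ⟨hpdx, hlt'⟩ := key x hx
      rw [hk1, pow_one] at hlt'
      have h2p : 2 * p ≤ x := by
        obtain ⟨t, rfl⟩ := hpdx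
        have : 2 ≤ t := by nlinarith [hp.pos]
        nlinarith
      obtain ⟨r', hr', hr'1, hr'2⟩ := Nat.exists_prime_lt_and_le_two_mul p hp.pos.ne'
      have : r' ≤ q x := le_q (Or.inl hr'.prime.isPrimePow) (by omega)
      have hqx : q x = p ^ k := hx.2.1
      rw [hk1, pow_one] at hqx
      omega
    constructor
    · rw [hempty]; exact Set.finite_empty
    · rw [hempty]
      have h0 : Nat.card (∅ : Set ℕ) = 0 := by simp
      rw [h0]
      exact_mod_cast le_of_lt (Real.rpow_pos_of_pos (by exact_mod_cast hp.pos) _)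
  · -- p ^ k < r : count multiples of p in (p^k, r)
    set m := (r - 1 - p ^ k) / p with hm
    set F : Finset ℕ := (Finset.Ioo (p ^ k) r).filter (fun x => p ∣ x) with hF
    have hsub : SS ⊆ ↑F := by
      intro x hx
      obtain ⟨hpdx, hgt⟩ := key x hx
      have hxr : x < r := by
        by_contra hxr
        have : r ≤ q x := le_q (Or.inl hr.prime.isPrimePow) (by omega)
        rw [hx.2.1] at this
        omega
      simp only [hF, Finset.coe_filter, Set.mem_setOf_eq, Finset.mem_Ioo]
      exact ⟨⟨hgt, hxr⟩, hpdx⟩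
    have hfin : SS.Finite := Set.Finite.subset F.finite_toSet hsub
    refine ⟨hfin, ?_⟩
    have hcard1 : Nat.card SS ≤ F.card := by
      have h := Nat.card_mono F.finite_toSet hsub
      have h2 : Nat.card (↑F : Set ℕ) = F.card := by
        rw [Nat.card_coe_set_eq, Set.ncard_coe_finset]
      rw [h2] at h
      exact h
    have hcard2 : F.card ≤ m := by
      have : F.card ≤ (Finset.Icc 1 m).card := by
        apply Finset.card_le_card_of_injOn (fun x => (x - p ^ k) / p)
        · intro x hx
          simp only [hF, Finset.mem_coe, Finset.mem_filter, Finset.mem_Ioo] at hx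
          obtain ⟨⟨hgt, hxr⟩, hpdx⟩ := hx
          have hpd : p ∣ x - p ^ k := Nat.dvd_sub hpdx (dvd_pow_self p (by omega))
          have hple : p ≤ x - p ^ k := Nat.le_of_dvd (by omega) hpd
          simp only [Finset.mem_coe, Finset.mem_Icc]
          constructor
          · rw [Nat.le_div_iff_mul_le hp.pos]; omega
          · apply Nat.div_le_div_right; omega
        · intro x hx y hy hxy
          simp only [hF, Finset.mem_coe, Finset.mem_filter, Finset.mem_Ioo] at hx hy
          have hpx : p ∣ x - p ^ k := Nat.dvd_sub hx.2 (dvd_pow_self p (by omega))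
          have hpy : p ∣ y - p ^ k := Nat.dvd_sub hy.2 (dvd_pow_self p (by omega))
          have h1 : (x - p ^ k) / p * p = x - p ^ k := Nat.div_mul_cancel hpx
          have h2 : (y - p ^ k) / p * p = y - p ^ k := Nat.div_mul_cancel hpy
          simp only at hxy
          rw [hxy] at h1
          have := hx.1.1; have := hy.1.1
          omega
      simpa using this
    -- real arithmetic
    have hmp : m * p ≤ r - 1 - p ^ k := Nat.div_mul_le_self _ _
    have hpRpos : (0 : ℝ) < (p : ℝ) := by exact_mod_cast hp.pos
    have h3 : ((r - 1 - p ^ k : ℕ) : ℝ) = (r : ℝ) - 1 - ((p : ℝ)) ^ k := by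
      have he : r - 1 - p ^ k = r - (1 + p ^ k) := by omega
      rw [he, Nat.cast_sub (by omega : 1 + p ^ k ≤ r)]
      push_cast; ring
    have hmpR : (m : ℝ) * (p : ℝ) ≤ (r : ℝ) - 1 - ((p : ℝ)) ^ k := by
      have h2 : ((m * p : ℕ) : ℝ) ≤ ((r - 1 - p ^ k : ℕ) : ℝ) := Nat.cast_le.mpr hmp
      rw [h3] at h2
      push_cast at h2
      exact h2
    have hA : (((p ^ k : ℕ) : ℝ)) ^ θ = (p : ℝ) ^ ((k : ℝ) * θ) := by
      rw [Nat.cast_pow, ← Real.rpow_natCast (p : ℝ) k,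
        ← Real.rpow_mul (le_of_lt hpRpos)]
    calc (Nat.card SS : ℝ) ≤ (m : ℝ) := by exact_mod_cast le_trans hcard1 hcard2
      _ ≤ (p : ℝ) ^ ((k : ℝ) * θ - 1) := by
          rw [Real.rpow_sub hpRpos, Real.rpow_one, le_div_iff₀ hpRpos]
          have hr2' : (r : ℝ) ≤ (p : ℝ) ^ k + ((p ^ k : ℕ) : ℝ) ^ θ := by
            push_cast at hr2 ⊢
            convert hr2 using 2 <;> push_cast <;> ring
          rw [← hA]
          push_cast at hr2' ⊢
          nlinarith [hmpR, hr2', Real.rpow_natCast (p : ℝ) k]
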